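/- Let 2 ≤ k ≤ n, λ > 0, p_1 > p_2 ≥ p_3 ≥ … ≥ p_k > 0, and let z_1,…,z_k ∈ ℂ^n be unit vectors that are δ-orthogonal for some δ ∈ [0,1]. Let M = ∑_{l=1}^k n p_l λ z_l z_l^* and let λ̃_1 be its largest eigenvalue. Then n p_1 λ ≤ λ̃_1 ≤ n p_1 λ + n p_2 λ (k−1)δ, and any unit eigenvector ṽ_1 of M with eigenvalue λ̃_1 satisfies |⟨z_1, ṽ_1⟩|² ≥ 1 − p_2(k−1)δ/(p_1 − p_2). -/

import Mathlib

open MeasureTheory ProbabilityTheory Complex Matrix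
open scoped BigOperators ENNReal

noncomputable section

/-- The standard Hermitian inner product on `ℂ^n`. -/
def hInner {n : ℕ} (x y : Fin n → ℂ) : ℂ := ∑ i, (starRingEnd ℂ) (x i) * y i

/-- The `ℓ₂` norm on `ℂ^n`. -/
def hNorm {n : ℕ} (x : Fin n → ℂ) : ℝ := Real.sqrt (∑ i, ‖x i‖ ^ 2)

/-- A family of vectors in `ℂ^n` is `δ`-orthogonal if all distinct pairs have inner
product bounded by `δ` times the product of the norms. -/
def DeltaOrth {n : ℕ} {ι : Type*} (z : ι → (Fin n → ℂ)) (δ : ℝ) : Prop :=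
  ∀ i j, i ≠ j → ‖hInner (z i) (z j)‖ ≤ δ * hNorm (z i) * hNorm (z j)

lemma hInner_eq {n : ℕ} (x y : EuclideanSpace ℂ (Fin n)) : hInner x y = inner ℂ x y := by
  simp [hInner, PiLp.inner_apply, RCLike.inner_apply, mul_comm]

lemma hNorm_eq {n : ℕ} (x : EuclideanSpace ℂ (Fin n)) : hNorm x = ‖x‖ := by
  rw [EuclideanSpace.norm_eq]; rfl

lemma hInner_conj {n : ℕ} (x y : Fin n → ℂ) :
    hInner y x = (starRingEnd ℂ) (hInner x y) := by
  simp [hInner, map_sum, mul_comm]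

lemma conj_mul_self (c : ℂ) : (starRingEnd ℂ) c * c = ((‖c‖^2 : ℝ) : ℂ) := by
  rw [← Complex.normSq_eq_conj_mul_self, Complex.normSq_eq_norm_sq]

lemma hInner_self {n : ℕ} (x : Fin n → ℂ) : hInner x x = ((hNorm x)^2 : ℝ) := by
  simp only [hInner, conj_mul_self, hNorm]
  rw [Real.sq_sqrt (by positivity)]
  push_cast
  rfl

lemma hInner_smul_right {n : ℕ} (a : ℂ) (x y : Fin n → ℂ) :
    hInner x (a • y) = a * hInner x y := by
  simp [hInner, Finset.mul_sum]; exact Finset.sum_congr rfl fun i _ => by ring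

lemma hInner_sum_right {n m : ℕ} (x : Fin n → ℂ) (f : Fin m → (Fin n → ℂ)) :
    hInner x (∑ j, f j) = ∑ j, hInner x (f j) := by
  simp [hInner, Finset.mul_sum]
  exact Finset.sum_comm

lemma hInner_norm_le {n : ℕ} (x y : Fin n → ℂ) : ‖hInner x y‖ ≤ hNorm x * hNorm y := by
  let x' : EuclideanSpace ℂ (Fin n) := WithLp.toLp 2 x
  let y' : EuclideanSpace ℂ (Fin n) := WithLp.toLp 2 y
  rw [show hInner x y = inner ℂ x' y' from hInner_eq x' y',
      show hNorm x = ‖x'‖ from hNorm_eq x', show hNorm y = ‖y'‖ from hNorm_eq y']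
  exact norm_inner_le_norm x' y'

lemma quadform {n k : ℕ} (a : Fin k → ℝ) (z : Fin k → (Fin n → ℂ))
    (M : Matrix (Fin n) (Fin n) ℂ)
    (hMdef : M = Matrix.of fun i j => ∑ l : Fin k, (a l : ℂ) * z l i * (starRingEnd ℂ) (z l j))
    (v : Fin n → ℂ) :
    hInner v (M.mulVec v) = ∑ l, (a l : ℂ) * ((‖hInner (z l) v‖^2 : ℝ) : ℂ) := by
  have hmv : ∀ i, M.mulVec v i = ∑ l, (a l : ℂ) * z l i * hInner (z l) v := by
    intro i
    simp only [hMdef, Matrix.mulVec, dotProduct, Matrix.of_apply, hInner,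
      Finset.sum_mul, Finset.mul_sum]
    rw [Finset.sum_comm]
    exact Finset.sum_congr rfl fun l _ => Finset.sum_congr rfl fun j _ => by ring
  rw [show hInner v (M.mulVec v) = ∑ i, (starRingEnd ℂ) (v i) * (M.mulVec v) i from rfl]
  simp only [hmv, Finset.mul_sum]
  rw [Finset.sum_comm]
  refine Finset.sum_congr rfl fun l _ => ?_
  have h1 : ∑ i, (starRingEnd ℂ) (v i) * ((a l : ℂ) * z l i * hInner (z l) v)
      = (a l : ℂ) * ((∑ i, (starRingEnd ℂ) (v i) * z l i) * hInner (z l) v) := by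
    simp only [Finset.mul_sum, Finset.sum_mul]
    exact Finset.sum_congr rfl fun i _ => by ring
  rw [h1, show (∑ i, (starRingEnd ℂ) (v i) * z l i) = hInner v (z l) from rfl,
    hInner_conj, conj_mul_self]

lemma sum_sq_inner_le {n k : ℕ} (hk1 : 1 ≤ k) (δ : ℝ) (hδ0 : 0 ≤ δ)
    (z : Fin k → (Fin n → ℂ)) (hz : ∀ l, hNorm (z l) = 1)
    (horth : ∀ i j : Fin k, i ≠ j → ‖hInner (z i) (z j)‖ ≤ δ)
    (v : Fin n → ℂ) (hv : hNorm v = 1) :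
    ∑ l, ‖hInner (z l) v‖^2 ≤ 1 + ((k : ℝ) - 1) * δ := by
  classical
  set E := EuclideanSpace ℂ (Fin n)
  let z' : Fin k → E := fun l => WithLp.toLp 2 (z l)
  let v' : E := WithLp.toLp 2 v
  let c : Fin k → ℂ := fun l => inner ℂ (z' l) v'
  have hc : ∀ l, hInner (z l) v = c l := fun l => hInner_eq (z' l) v'
  have hvn : ‖v'‖ = 1 := by rw [← hNorm_eq]; exact hv
  set S : ℝ := ∑ l, ‖c l‖^2 with hS
  have hS0 : 0 ≤ S := Finset.sum_nonneg fun l _ => sq_nonneg _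
  set T : ℝ := ∑ l, ‖c l‖ with hT
  have hTsq : T^2 ≤ (k : ℝ) * S := by
    simpa using sq_sum_le_card_mul_sum_sq (s := Finset.univ) (f := fun l => ‖c l‖)
  let w : E := ∑ l, c l • z' l
  have hwv : (inner ℂ w v' : ℂ) = (S : ℂ) := by
    simp only [w, E, sum_inner, inner_smul_left]
    rw [hS, Complex.ofReal_sum]
    refine Finset.sum_congr rfl fun l _ => ?_
    change (starRingEnd ℂ) (c l) * c l = _
    rw [conj_mul_self]
  have hSw : S ≤ ‖w‖ := by
    calc S = ‖(S : ℂ)‖ := by simp [Complex.norm_real, _root_.abs_of_nonneg hS0]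
    _ = ‖(inner ℂ w v' : ℂ)‖ := by rw [hwv]
    _ ≤ ‖w‖ * ‖v'‖ := norm_inner_le_norm w v'
    _ = ‖w‖ := by rw [hvn, mul_one]
  have hzz : ∀ l, (inner ℂ (z' l) (z' l) : ℂ) = 1 := by
    intro l
    rw [← hInner_eq, hInner_self, show hNorm (z' l).ofLp = 1 from hz l]; norm_num
  have hww : (inner ℂ w w : ℂ)
      = ∑ l, ∑ l', (starRingEnd ℂ) (c l) * (c l' * inner ℂ (z' l) (z' l')) := by
    simp only [w, E, sum_inner, inner_smul_left, inner_sum, inner_smul_right, Finset.mul_sum]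
    rw [Finset.sum_comm]
    exact Finset.sum_congr rfl fun l _ => Finset.sum_congr rfl fun l' _ => by ring
  have herase : ∀ l : Fin k, ∑ l' ∈ Finset.univ.erase l, ‖c l'‖ = T - ‖c l‖ := by
    intro l
    have h := Finset.add_sum_erase Finset.univ (fun l => ‖c l‖) (Finset.mem_univ l)
    rw [hT]; linarith
  have hwnorm : ‖w‖^2 ≤ S + δ * (T^2 - S) := by
    have h1 : ‖w‖^2 = ‖(inner ℂ w w : ℂ)‖ := by
      rw [@inner_self_eq_norm_sq_to_K ℂ E _ _ _ w, norm_pow]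
      simp
    rw [h1, hww]
    have h2 : ∀ l, ‖∑ l', (starRingEnd ℂ) (c l) * (c l' * (inner ℂ (z' l) (z' l') : ℂ))‖
        ≤ ‖c l‖^2 + δ * (‖c l‖ * (T - ‖c l‖)) := by
      intro l
      calc ‖∑ l', (starRingEnd ℂ) (c l) * (c l' * (inner ℂ (z' l) (z' l') : ℂ))‖
          ≤ ∑ l', ‖(starRingEnd ℂ) (c l) * (c l' * (inner ℂ (z' l) (z' l') : ℂ))‖ :=
            norm_sum_le _ _
        _ = ∑ l', ‖c l‖ * (‖c l'‖ * ‖(inner ℂ (z' l) (z' l') : ℂ)‖) := by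
            simp [norm_mul]
        _ = ‖c l‖ * (‖c l‖ * ‖(inner ℂ (z' l) (z' l) : ℂ)‖)
            + ∑ l' ∈ Finset.univ.erase l, ‖c l‖ * (‖c l'‖ * ‖(inner ℂ (z' l) (z' l') : ℂ)‖) := by
            rw [← Finset.add_sum_erase _ _ (Finset.mem_univ l)]
        _ ≤ ‖c l‖^2 + δ * (‖c l‖ * (T - ‖c l‖)) := by
            gcongr ?_ + ?_
            · rw [hzz l]; simp [sq]
            · have hle : ∑ l' ∈ Finset.univ.erase l, ‖c l‖ * (‖c l'‖ * ‖(inner ℂ (z' l) (z' l') : ℂ)‖)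
                  ≤ ∑ l' ∈ Finset.univ.erase l, δ * (‖c l‖ * ‖c l'‖) := by
                refine Finset.sum_le_sum fun l' hl' => ?_
                have hne : l ≠ l' := fun h => (Finset.mem_erase.1 hl').1 h.symm
                have hb := horth l l' hne
                rw [show hInner (z l) (z l') = inner ℂ (z' l) (z' l') from hInner_eq _ _] at hb
                calc ‖c l‖ * (‖c l'‖ * ‖(inner ℂ (z' l) (z' l') : ℂ)‖)
                    ≤ ‖c l‖ * (‖c l'‖ * δ) := by gcongr
                  _ = δ * (‖c l‖ * ‖c l'‖) := by ring
              refine hle.trans ?_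
              rw [← Finset.mul_sum, ← Finset.mul_sum, herase l]
    calc ‖∑ l, ∑ l', (starRingEnd ℂ) (c l) * (c l' * (inner ℂ (z' l) (z' l') : ℂ))‖
        ≤ ∑ l, ‖∑ l', (starRingEnd ℂ) (c l) * (c l' * (inner ℂ (z' l) (z' l') : ℂ))‖ :=
          norm_sum_le _ _
      _ ≤ ∑ l, (‖c l‖^2 + δ * (‖c l‖ * (T - ‖c l‖))) := Finset.sum_le_sum fun l _ => h2 l
      _ = S + δ * (∑ l, ‖c l‖ * (T - ‖c l‖)) := by
          rw [Finset.sum_add_distrib, ← Finset.mul_sum]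
      _ = S + δ * (T^2 - S) := by
          have h4 : ∑ l, ‖c l‖ * (T - ‖c l‖) = T^2 - S := by
            have : ∑ l, ‖c l‖ * (T - ‖c l‖) = (∑ l, ‖c l‖) * T - ∑ l, ‖c l‖^2 := by
              rw [Finset.sum_mul, ← Finset.sum_sub_distrib]
              exact Finset.sum_congr rfl fun l _ => by ring
            rw [this, ← hT, ← hS, sq]
          rw [h4]
  have hR : 0 ≤ 1 + ((k:ℝ)-1)*δ := by
    have : (1:ℝ) ≤ k := by exact_mod_cast hk1
    nlinarith
  have key : S^2 ≤ S * (1 + ((k:ℝ) - 1) * δ) := by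
    have h3 : ‖w‖^2 ≤ S * (1 + ((k:ℝ)-1)*δ) := by
      refine hwnorm.trans ?_
      have hTS : T^2 - S ≤ ((k:ℝ)-1) * S := by nlinarith
      nlinarith
    nlinarith [hSw, norm_nonneg w]
  have hfin : S ≤ 1 + ((k:ℝ)-1)*δ := by nlinarith
  calc ∑ l, ‖hInner (z l) v‖^2 = S := by
        rw [hS]; exact Finset.sum_congr rfl fun l _ => by rw [hc l]
    _ ≤ _ := hfin

lemma rayleigh {n : ℕ} (M : Matrix (Fin n) (Fin n) ℂ) (hM : M.IsHermitian)
    (ev0 : ℝ) (hub : ∀ j, hM.eigenvalues j ≤ ev0)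
    (x : EuclideanSpace ℂ (Fin n)) (hx : ‖x‖ = 1) :
    (hInner x (M.mulVec x)).re ≤ ev0 := by
  classical
  set u := hM.eigenvectorBasis with hu
  set μ := hM.eigenvalues with hμ
  let c : Fin n → ℂ := fun j => inner ℂ (u j) x
  have hrepr : x = ∑ j, c j • u j := (u.sum_repr' x).symm
  have hmv : M.mulVec x = ∑ j, c j • ((μ j : ℂ) • (u j : Fin n → ℂ)) := by
    conv_lhs => rw [hrepr]
    have : M.mulVec (↑(∑ j, c j • u j) : Fin n → ℂ)
        = ∑ j, c j • (M.mulVec (u j)) := by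
      rw [← Matrix.mulVecLin_apply]
      rw [show (↑(∑ j, c j • u j) : Fin n → ℂ) = ∑ j, c j • (u j : Fin n → ℂ) from by simp [WithLp.ofLp_sum, WithLp.ofLp_smul]]
      simp [map_sum]
    rw [this]
    refine Finset.sum_congr rfl fun j _ => ?_
    rw [show M.mulVec (u j : Fin n → ℂ) = μ j • (u j : Fin n → ℂ) from hM.mulVec_eigenvectorBasis j]
    congr 1
  have hexp : hInner x (M.mulVec x) = ∑ j, (μ j : ℂ) * ((‖c j‖^2 : ℝ) : ℂ) := by
    rw [hmv, hInner_sum_right]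
    refine Finset.sum_congr rfl fun j _ => ?_
    rw [hInner_smul_right, hInner_smul_right]
    rw [show hInner x (u j) = inner ℂ (x : EuclideanSpace ℂ (Fin n)) (u j) from hInner_eq _ _]
    rw [← inner_conj_symm x (u j)]
    rw [show (inner ℂ (u j) x : ℂ) = c j from rfl]
    rw [show c j * ((μ j : ℂ) * (starRingEnd ℂ) (c j)) = (μ j : ℂ) * ((starRingEnd ℂ) (c j) * c j) from by ring, conj_mul_self]
  have hpar : ∑ j, ‖c j‖^2 = 1 := by
    have h1 : (∑ j, ((‖c j‖^2 : ℝ) : ℂ)) = 1 := by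
      have h := u.sum_inner_mul_inner x x
      rw [@inner_self_eq_norm_sq_to_K ℂ _ _ _ _ x, hx] at h
      simp only [RCLike.ofReal_one, Complex.ofReal_one, one_pow] at h
      rw [← h]
      refine Finset.sum_congr rfl fun j _ => ?_
      rw [← inner_conj_symm x (u j), show (inner ℂ (u j) x : ℂ) = c j from rfl, conj_mul_self]
    exact_mod_cast h1
  rw [hexp]
  have : (∑ j, (μ j : ℂ) * ((‖c j‖^2 : ℝ) : ℂ)).re = ∑ j, μ j * ‖c j‖^2 := by
    rw [Complex.re_sum]
    refine Finset.sum_congr rfl fun j _ => ?_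
    rw [← Complex.ofReal_mul]
    exact Complex.ofReal_re _
  rw [this]
  calc ∑ j, μ j * ‖c j‖^2 ≤ ∑ j, ev0 * ‖c j‖^2 :=
        Finset.sum_le_sum fun j _ => mul_le_mul_of_nonneg_right (hub j) (sq_nonneg _)
    _ = ev0 := by rw [← Finset.mul_sum, hpar, mul_one]

/-- for `M = ∑ₗ npₗλ zₗzₗ^*` with `p₁ > p₂ ≥ … ≥ p_k > 0` and `z₁,…,z_k`
unit and `δ`-orthogonal, the largest eigenvalue `λ̃₁` satisfies
`np₁λ ≤ λ̃₁ ≤ np₁λ + np₂λ(k−1)δ`, and any unit top eigenvector `ṽ₁` satisfies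
`|⟨z₁,ṽ₁⟩|² ≥ 1 − p₂(k−1)δ/(p₁−p₂)`. -/
theorem stmt13 {n k : ℕ} (hk : 2 ≤ k) (hkn : k ≤ n)
    (lam : ℝ) (hlam : 0 < lam)
    (p : Fin k → ℝ) (hpk : 0 < p ⟨k - 1, by omega⟩)
    (hp12 : p ⟨1, by omega⟩ < p ⟨0, by omega⟩)
    (hpmono : ∀ l l' : Fin k, l ≤ l' → p l' ≤ p l)
    (δ : ℝ) (hδ : δ ∈ Set.Icc (0:ℝ) 1)
    (z : Fin k → (Fin n → ℂ)) (hz : ∀ l, hNorm (z l) = 1)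
    (horth : DeltaOrth z δ)
    (M : Matrix (Fin n) (Fin n) ℂ)
    (hMdef : M = Matrix.of fun i j =>
      ∑ l : Fin k, ((n : ℂ) * (p l : ℂ) * (lam : ℂ)) * z l i * (starRingEnd ℂ) (z l j))
    (hM : M.IsHermitian)
    (ev : Fin n → ℝ) (hanti : Antitone ev)
    (hperm : ∃ σ : Equiv.Perm (Fin n), ∀ i, ev i = hM.eigenvalues (σ i)) :
    ((n : ℝ) * p ⟨0, by omega⟩ * lam ≤ ev ⟨0, by omega⟩ ∧
      ev ⟨0, by omega⟩ ≤ (n : ℝ) * p ⟨0, by omega⟩ * lam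
        + (n : ℝ) * p ⟨1, by omega⟩ * lam * ((k : ℝ) - 1) * δ) ∧
    ∀ vt1 : Fin n → ℂ, hNorm vt1 = 1 →
      (∀ i, M.mulVec vt1 i = (ev ⟨0, by omega⟩ : ℂ) * vt1 i) →
      1 - p ⟨1, by omega⟩ * ((k : ℝ) - 1) * δ / (p ⟨0, by omega⟩ - p ⟨1, by omega⟩)
        ≤ ‖hInner (z ⟨0, by omega⟩) vt1‖ ^ 2 := by
  classical
  obtain ⟨hδ0, hδ1⟩ := hδ
  have hn0 : 0 < n := by omega
  set i0 : Fin k := ⟨0, by omega⟩ with hi0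
  set i1 : Fin k := ⟨1, by omega⟩ with hi1
  set a : Fin k → ℝ := fun l => (n : ℝ) * p l * lam with ha
  have haval : ∀ l, a l = (n : ℝ) * p l * lam := fun l => rfl
  have hMdef' : M = Matrix.of fun i j =>
      ∑ l : Fin k, ((a l : ℝ) : ℂ) * z l i * (starRingEnd ℂ) (z l j) := by
    rw [hMdef]
    refine congrArg Matrix.of ?_
    funext i j
    refine Finset.sum_congr rfl fun l _ => ?_
    push_cast [ha]
    ring
  have hppos : ∀ l, 0 < p l := by
    intro l
    refine lt_of_lt_of_le hpk (hpmono l ⟨k-1, by omega⟩ ?_)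
    rw [Fin.le_def]
    have := l.isLt
    simp only []
    omega
  have hp1le : ∀ l : Fin k, l ≠ i0 → p l ≤ p i1 := by
    intro l hl
    refine hpmono i1 l ?_
    rw [Fin.le_def]
    have := l.isLt
    have h0 : l.val ≠ 0 := by
      intro h
      exact hl (by rw [hi0]; exact Fin.ext h)
    simp only [hi1]
    omega
  have hnlam : 0 < (n : ℝ) * lam := by positivity
  have hapos : ∀ l, 0 < a l := fun l => by
    have := hppos l; rw [ha]; positivity
  have horth' : ∀ i j : Fin k, i ≠ j → ‖hInner (z i) (z j)‖ ≤ δ := by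
    intro i j h
    have := horth i j h
    rwa [hz i, hz j, mul_one, mul_one] at this
  -- the quantitative statement for a unit eigenvector of eigenvalue e
  have equad : ∀ (v : Fin n → ℂ), hNorm v = 1 → ∀ (e : ℝ),
      (∀ i, M.mulVec v i = (e : ℂ) * v i) →
      e = ∑ l, a l * ‖hInner (z l) v‖^2 := by
    intro v hv e hei
    have h1 : hInner v (M.mulVec v) = (e : ℂ) := by
      have h0 : M.mulVec v = (e : ℂ) • v := by
        funext i; rw [hei i]; rfl
      rw [h0, hInner_smul_right, hInner_self, hv]
      norm_num
    have h2 := quadform a z M hMdef' v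
    rw [h1] at h2
    have h3 : ((∑ l, a l * ‖hInner (z l) v‖^2 : ℝ) : ℂ)
        = ∑ l, (a l : ℂ) * ((‖hInner (z l) v‖^2 : ℝ) : ℂ) := by
      push_cast; rfl
    exact_mod_cast h2.trans h3.symm
  -- bound on e for a unit eigenvector
  have ebound : ∀ (v : Fin n → ℂ), hNorm v = 1 → ∀ (e : ℝ),
      (∀ i, M.mulVec v i = (e : ℂ) * v i) →
      e ≤ a i0 * ‖hInner (z i0) v‖^2
        + a i1 * ((1 + ((k:ℝ)-1)*δ) - ‖hInner (z i0) v‖^2) := by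
    intro v hv e hei
    set q : Fin k → ℝ := fun l => ‖hInner (z l) v‖^2 with hq
    have hq0 : ∀ l, 0 ≤ q l := fun l => sq_nonneg _
    have hqsum : ∑ l, q l ≤ 1 + ((k:ℝ)-1)*δ :=
      sum_sq_inner_le (by omega) δ hδ0 z hz horth' v hv
    have hsplit : ∑ l, a l * q l
        = a i0 * q i0 + ∑ l ∈ Finset.univ.erase i0, a l * q l := by
      rw [← Finset.add_sum_erase _ _ (Finset.mem_univ i0)]
    have hrest : ∑ l ∈ Finset.univ.erase i0, a l * q l
        ≤ a i1 * ((∑ l, q l) - q i0) := by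
      have h5 : ∑ l ∈ Finset.univ.erase i0, a l * q l
          ≤ ∑ l ∈ Finset.univ.erase i0, a i1 * q l := by
        refine Finset.sum_le_sum fun l hl => ?_
        have hne : l ≠ i0 := (Finset.mem_erase.1 hl).1
        refine mul_le_mul_of_nonneg_right ?_ (hq0 l)
        rw [haval l, haval i1]
        have := hp1le l hne
        have hn' : (0:ℝ) ≤ (n:ℝ) := by positivity
        nlinarith
      refine h5.trans ?_
      rw [← Finset.mul_sum]
      have h6 : ∑ l ∈ Finset.univ.erase i0, q l = (∑ l, q l) - q i0 := by
        have h := Finset.add_sum_erase Finset.univ q (Finset.mem_univ i0)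
        linarith
      rw [h6]
    have heq : e = ∑ l, a l * q l := equad v hv e hei
    have ha1 : 0 < a i1 := hapos i1
    have hthis : a i1 * ((∑ l, q l) - q i0) ≤ a i1 * ((1 + ((k:ℝ)-1)*δ) - q i0) := by
      refine mul_le_mul_of_nonneg_left ?_ (le_of_lt ha1)
      linarith
    show e ≤ a i0 * q i0 + a i1 * ((1 + ((k:ℝ)-1)*δ) - q i0)
    rw [heq, hsplit]
    linarith
  -- the top eigenvalue
  obtain ⟨σ, hσ⟩ := hperm
  set e0 : ℝ := ev ⟨0, by omega⟩ with he0
  have hub : ∀ j, hM.eigenvalues j ≤ e0 := by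
    intro j
    have h := hσ (σ.symm j)
    rw [Equiv.apply_symm_apply] at h
    rw [← h, he0]
    refine hanti ?_
    rw [Fin.le_def]
    exact Nat.zero_le _
  -- lower bound : e0 ≥ a i0
  have hlow : a i0 ≤ e0 := by
    let z0E : EuclideanSpace ℂ (Fin n) := WithLp.toLp 2 (z i0)
    have hz0 : ‖z0E‖ = 1 := by rw [← hNorm_eq]; exact hz i0
    have hray : (hInner (z i0) (M.mulVec (z i0))).re ≤ e0 :=
      rayleigh M hM e0 hub z0E hz0
    have hquad := quadform a z M hMdef' (z i0)
    have hre : (hInner (z i0) (M.mulVec (z i0))).re = ∑ l, a l * ‖hInner (z l) (z i0)‖^2 := by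
      rw [hquad, Complex.re_sum]
      refine Finset.sum_congr rfl fun l _ => ?_
      rw [← Complex.ofReal_mul]
      exact Complex.ofReal_re _
    rw [hre] at hray
    refine le_trans ?_ hray
    have hterm : a i0 * ‖hInner (z i0) (z i0)‖^2 = a i0 := by
      rw [hInner_self, hz i0]
      norm_num
    calc a i0 = a i0 * ‖hInner (z i0) (z i0)‖^2 := hterm.symm
      _ ≤ ∑ l, a l * ‖hInner (z l) (z i0)‖^2 := by
          refine Finset.single_le_sum (f := fun l => a l * ‖hInner (z l) (z i0)‖^2)
            (fun l _ => ?_) (Finset.mem_univ i0)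
          exact mul_nonneg (le_of_lt (hapos l)) (sq_nonneg _)
  -- the eigenvector of eigenvalue e0 from the eigenvector basis
  have hexists : ∃ v : Fin n → ℂ, hNorm v = 1 ∧ ∀ i, M.mulVec v i = (e0 : ℂ) * v i := by
    set j0 : Fin n := σ ⟨0, by omega⟩ with hj0
    let u0 : EuclideanSpace ℂ (Fin n) := hM.eigenvectorBasis j0
    refine ⟨u0, ?_, ?_⟩
    · rw [show hNorm u0 = ‖u0‖ from hNorm_eq u0]
      exact hM.eigenvectorBasis.orthonormal.1 j0
    · intro i
      have h := hM.mulVec_eigenvectorBasis j0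
      have h2 : M.mulVec u0 i = hM.eigenvalues j0 • u0 i := congrFun h i
      rw [h2]
      have h3 : hM.eigenvalues j0 = e0 := (hσ ⟨0, by omega⟩).symm
      rw [h3]
      exact Complex.real_smul
  -- upper bound : e0 ≤ a i0 + a i1 * (k-1) * δ
  have hup : e0 ≤ a i0 + a i1 * ((k:ℝ)-1) * δ := by
    obtain ⟨v, hv, hei⟩ := hexists
    have h := ebound v hv e0 hei
    have hq1 : ‖hInner (z i0) v‖^2 ≤ 1 := by
      have hcs : ‖hInner (z i0) v‖ ≤ 1 := by
        have := hInner_norm_le (z i0) v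
        rwa [hz i0, hv, mul_one] at this
      nlinarith [norm_nonneg (hInner (z i0) v)]
    have hq0 : 0 ≤ ‖hInner (z i0) v‖^2 := sq_nonneg _
    have ha01 : a i1 ≤ a i0 := by
      rw [haval i1, haval i0]
      have hn' : (0:ℝ) ≤ (n:ℝ) := by positivity
      nlinarith [le_of_lt hp12]
    have ha1 : 0 < a i1 := hapos i1
    have hkd : 0 ≤ ((k:ℝ)-1) * δ := by
      have : (2:ℝ) ≤ k := by exact_mod_cast hk
      nlinarith
    nlinarith [h]
  constructor
  · constructor
    · calc (n : ℝ) * p ⟨0, by omega⟩ * lam = a i0 := rfl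
        _ ≤ e0 := hlow
    · calc ev ⟨0, by omega⟩ = e0 := rfl
        _ ≤ a i0 + a i1 * ((k:ℝ)-1) * δ := hup
        _ = (n : ℝ) * p ⟨0, by omega⟩ * lam
            + (n : ℝ) * p ⟨1, by omega⟩ * lam * ((k : ℝ) - 1) * δ := rfl
  · intro vt1 hvt1 heig
    show 1 - p i1 * ((k : ℝ) - 1) * δ / (p i0 - p i1) ≤ ‖hInner (z i0) vt1‖ ^ 2
    set q0 : ℝ := ‖hInner (z i0) vt1‖^2 with hq0def
    have h := ebound vt1 hvt1 e0 heig
    have h2 : a i0 ≤ a i0 * q0 + a i1 * ((1 + ((k:ℝ)-1)*δ) - q0) := le_trans hlow h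
    rw [haval i0, haval i1] at h2
    have h4 : ((n:ℝ)*lam) * ((p i0 - p i1)*(1-q0))
        ≤ ((n:ℝ)*lam) * (p i1*(((k:ℝ)-1)*δ)) := by nlinarith [h2]
    have hkey2 : (p i0 - p i1)*(1-q0) ≤ p i1*(((k:ℝ)-1)*δ) :=
      le_of_mul_le_mul_left (by linarith [h4]) hnlam
    have hD : 0 < p i0 - p i1 := by linarith [hp12]
    have hfin : 1 - q0 ≤ p i1 * ((k:ℝ)-1) * δ / (p i0 - p i1) := by
      rw [le_div_iff₀ hD]
      nlinarith [hkey2]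
    linarith
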